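/- Assume β > 3 and α = 1/β. If w ∈ L^{α,β} and s(w) ∈ P^b ∖ {ε}, then ŵ ∈ L^{α,β} and s(ŵ) = ε. -/

import Mathlib

open Filter Topology MeasureTheory ENNReal
open scoped Classical

noncomputable section

namespace AB

/-- The (α,β)-transformation `T(x) = βx + α − ⌊βx + α⌋`. -/
def T (α β : ℝ) (x : ℝ) : ℝ := β * x + α - ⌊β * x + α⌋

/-- `λ = ⌈α+β⌉ − 1`, as a natural number. -/
def lamNat (α β : ℝ) : ℕ := (⌈α + β⌉ - 1).toNat

/-- The digit of `x ∈ [0,1)`: the index `k` with `x ∈ J_k`, namely `⌊βx + α⌋`. -/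
def digit (α β : ℝ) (x : ℝ) : ℕ := (⌊β * x + α⌋).toNat

/-- The (α,β)-expansion of `x`. -/
def iSeq (α β : ℝ) (x : ℝ) : ℕ → ℕ := fun n => digit α β ((T α β)^[n] x)

/-- The one-sided (α,β)-shift: closure (in the product topology) of the set of expansions. -/
def Xab (α β : ℝ) : Set (ℕ → ℕ) :=
  closure {s | ∃ x ∈ Set.Ico (0 : ℝ) 1, s = iSeq α β x}

/-- Word of given length read in a one-sided sequence starting at position `k`. -/
def wordN (s : ℕ → ℕ) (k len : ℕ) : List ℕ := (List.range len).map fun i => s (k + i)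

/-- The language of the (α,β)-shift: finite words appearing in points of `Xab`. -/
def Lang (α β : ℝ) : Set (List ℕ) :=
  {w | ∃ s ∈ Xab α β, ∃ k : ℕ, w = wordN s k w.length}

/-- `a = i_{α,β}(0)`. -/
def aSeq (α β : ℝ) : ℕ → ℕ := iSeq α β 0

/-- The prefix of length `l` of a sequence, as a word. -/
def pre (s : ℕ → ℕ) (l : ℕ) : List ℕ := (List.range l).map s

/-- Lexicographic (non-strict) order on words. -/
def wordLe (u v : List ℕ) : Prop := u = v ∨ List.Lex (· < ·) u v

/-- Lexicographic (non-strict) order on one-sided sequences. -/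
def seqLe (x y : ℕ → ℕ) : Prop :=
  x = y ∨ ∃ n : ℕ, (∀ i < n, x i = y i) ∧ x n < y n

/-- The largest `k ≤ |w|` such that the length-`k` suffix of `w` equals the length-`k`
prefix of `s` (this is `k1` for `s = a` and `k2` for `s = b`). -/
def kk (s : ℕ → ℕ) (w : List ℕ) : ℕ :=
  Nat.findGreatest (fun k => w.drop (w.length - k) = pre s k) w.length

/-- The set of finite prefixes of a sequence (`P^a`, `P^b`). -/
def Pset (s : ℕ → ℕ) : Set (List ℕ) := {u | ∃ l : ℕ, u = pre s l}

/-- The distinguished suffix `s(w)`. -/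
def sWord (a b : ℕ → ℕ) (w : List ℕ) : List ℕ :=
  if kk b w < kk a w then w.drop (w.length - kk a w)
  else if kk a w < kk b w then w.drop (w.length - kk b w)
  else []

/-- The hat operation on `P = P^a ∪ P^b` (for `β > 3`, `α = 1/β`). -/
def hatP (a b : ℕ → ℕ) (lam : ℕ) (u : List ℕ) : List ℕ :=
  if u = [] then []
  else if u ∈ Pset a then u.dropLast ++ [u.getLast?.getD 0 + 1]
  else if 3 ≤ u.getLast?.getD 0 then u.dropLast ++ [u.getLast?.getD 0 - 1]
  else
    (u.set (u.length - kk a u.dropLast - 2) (u.getD (u.length - kk a u.dropLast - 2) 0 - 1)).set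
      (u.length - kk a u.dropLast - 1) (lam - 1)

/-- `ŵ` for `w = v·s(w)`: replace the distinguished suffix by its hat. -/
def hatW (a b : ℕ → ℕ) (lam : ℕ) (w : List ℕ) : List ℕ :=
  w.take (w.length - (sWord a b w).length) ++ hatP a b lam (sWord a b w)

/-- `w̃`: the hat operation applied twice. -/
def tildeW (a b : ℕ → ℕ) (lam : ℕ) (w : List ℕ) : List ℕ :=
  hatW a b lam (hatW a b lam w)

/-- `z(u)` for `u ∈ P^b`. -/
def zP (a b : ℕ → ℕ) (u : List ℕ) : ℕ :=
  if u = [] then 0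
  else sSup ({k : ℕ | (u ++ pre (fun i => a (kk a u + i)) k) ∈ Pset b} ∪ {0})

/-- `z(w)` for a word `w` in the language. -/
def zW (a b : ℕ → ℕ) (w : List ℕ) : ℕ :=
  if kk a w < kk b w then zP a b (w.drop (w.length - kk b w)) else 0

/-- `z̄(n) = max{z(u) : u prefix of b, |u| ≤ n}`. -/
def zbar (a b : ℕ → ℕ) (n : ℕ) : ℕ :=
  (Finset.range (n + 1)).sup fun l => zP a b (pre b l)

/-- The natural extension `Σ^{α,β}`. -/
def SigmaAB (α β : ℝ) : Set (ℤ → ℕ) :=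
  {x | ∀ k : ℤ, (fun n : ℕ => x (k + n)) ∈ Xab α β}

/-- `σ^j` on two-sided sequences. -/
def shiftI {A : Type*} (j : ℤ) (x : ℤ → A) : ℤ → A := fun n => x (n + j)

/-- Word of given length read in a two-sided sequence starting at position `k`. -/
def wordZ (x : ℤ → ℕ) (k : ℤ) (len : ℕ) : List ℕ := (List.range len).map fun i => x (k + i)

/-- The map `g : L^{α,β} → {0,1}`. -/
def gW (a b : ℕ → ℕ) (w : List ℕ) : ℕ :=
  if kk a w = 0 ∧ 0 < kk b w ∧ b (kk b w) ≤ 1 then 0 else 1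

/-- `w^♯`: the word `w` placed at positions `k,…,k+|w|−1`, followed by `g(w)` at
position `k+|w|`, and `1` at all other positions. -/
def wSharp (a b : ℕ → ℕ) (k : ℤ) (w : List ℕ) : ℤ → ℕ :=
  fun j => if k ≤ j ∧ j < k + w.length then w.getD (j - k).toNat 1
           else if j = k + w.length then gW a b w else 1

/-- The finite approximation sets `E^n ⊆ Σ^{α,β}`. -/
def En (α β : ℝ) (b : ℕ → ℕ) (n : ℕ) : Set (ℤ → ℕ) :=
  {x | wordZ x (-(n : ℤ)) (2 * n + 1) ∈ Lang α β ∧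
       x ((n : ℤ) + 1) = gW (aSeq α β) b (wordZ x (-(n : ℤ)) (2 * n + 1)) ∧
       ∀ j : ℤ, j < -(n : ℤ) ∨ (n : ℤ) + 1 < j → x j = 1}

/-- `s(x_k^-) = ε` for the left-infinite word `x_{(-∞,k-1]}`: no nonempty suffix of it is a
prefix of `a` or of `b`. -/
def leftStar (a b : ℕ → ℕ) (x : ℤ → ℕ) (k : ℤ) : Prop :=
  (∀ K : ℕ, 1 ≤ K → ¬ ∀ i : ℕ, i < K → x (k - K + i) = a i) ∧
  (∀ K : ℕ, 1 ≤ K → ¬ ∀ i : ℕ, i < K → x (k - K + i) = b i)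

/-- `E^n_{[k,l]}(v)`. -/
def EnCyl (α β : ℝ) (b : ℕ → ℕ) (n : ℕ) (k l : ℤ) (v : List ℕ) : Set (ℤ → ℕ) :=
  {x ∈ En α β b n | wordZ x k (l - k + 1).toNat = v}

/-- `E^{*,n}_{[k,l]}(v)`. -/
def EnCylStar (α β : ℝ) (b : ℕ → ℕ) (n : ℕ) (k l : ℤ) (v : List ℕ) : Set (ℤ → ℕ) :=
  {x ∈ EnCyl α β b n k l v | leftStar (aSeq α β) b x k}

/-- The Birkhoff sum `∑_{j=−n}^{n} φ(σ^j x)`. -/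
def birkhoff (φ : (ℤ → ℕ) → ℝ) (n : ℕ) (x : ℤ → ℕ) : ℝ :=
  ∑ j ∈ Finset.Icc (-(n : ℤ)) (n : ℤ), φ (shiftI j x)

/-- `Ξ^n_{[k,l]}(v)`. -/
def Xi (α β : ℝ) (b : ℕ → ℕ) (φ : (ℤ → ℕ) → ℝ) (n : ℕ) (k l : ℤ) (v : List ℕ) : ℝ :=
  ∑' x : (EnCyl α β b n k l v), Real.exp (birkhoff φ n x.1)

/-- `Ξ^{*,n}_{[k,l]}(v)`. -/
def XiStar (α β : ℝ) (b : ℕ → ℕ) (φ : (ℤ → ℕ) → ℝ) (n : ℕ) (k l : ℤ) (v : List ℕ) : ℝ :=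
  ∑' x : (EnCylStar α β b n k l v), Real.exp (birkhoff φ n x.1)

/-- `δ_i(f)`, as an extended nonnegative real. -/
def oscE {A : Type*} (f : (ℤ → A) → ℝ) (i : ℤ) : ℝ≥0∞ :=
  ⨆ (x : ℤ → A) (y : ℤ → A) (_ : ∀ k : ℤ, k ≠ i → x k = y k), ENNReal.ofReal |f x - f y|

/-- `‖f‖_δ` for a function on the full shift. -/
def enormFull {A : Type*} (f : (ℤ → A) → ℝ) : ℝ≥0∞ := ∑' i : ℤ, oscE f i

/-- `‖f‖_δ` for a function on a subshift `X`: infimum over continuous extensions. -/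
def enormOn {A : Type*} [TopologicalSpace A] (X : Set (ℤ → A)) (f : (ℤ → A) → ℝ) : ℝ≥0∞ :=
  ⨅ (g : (ℤ → A) → ℝ) (_ : Continuous g) (_ : ∀ x ∈ X, g x = f x), enormFull g

/-- `f` has bounded total oscillations on `X` (i.e. `f ∈ B(X)`). -/
def BTO {A : Type*} [TopologicalSpace A] (X : Set (ℤ → A)) (f : (ℤ → A) → ℝ) : Prop :=
  ContinuousOn f X ∧ enormOn X f ≠ ⊤

/-- The real value of `‖f‖_δ`. -/
def dnorm {A : Type*} [TopologicalSpace A] (X : Set (ℤ → A)) (f : (ℤ → A) → ℝ) : ℝ :=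
  (enormOn X f).toReal

/-- The pressure `p(φ)`. -/
def pressure (α β : ℝ) (b : ℕ → ℕ) (φ : (ℤ → ℕ) → ℝ) : ℝ :=
  limUnder atTop fun n : ℕ =>
    Real.log (∑' x : (En α β b n), Real.exp (birkhoff φ n x.1)) / (2 * n + 1)

/-- `ν` is a tangent functional to the pressure at `φ` (an equilibrium measure for `φ`). -/
def IsTangent (α β : ℝ) (b : ℕ → ℕ) (φ : (ℤ → ℕ) → ℝ) (ν : Measure (ℤ → ℕ)) : Prop :=
  ∀ f : (ℤ → ℕ) → ℝ, ContinuousOn f (SigmaAB α β) →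
    pressure α β b φ + ∫ x, f x ∂ν ≤ pressure α β b (fun x => φ x + f x)

/-- The cylinder `[x_1 … x_m]` in `Σ^{α,β}`. -/
def cyl (α β : ℝ) (x : ℤ → ℕ) (m : ℕ) : Set (ℤ → ℕ) :=
  {y ∈ SigmaAB α β | ∀ i : ℕ, 1 ≤ i → i ≤ m → y (i : ℤ) = x (i : ℤ)}

/-- `ν` is a weak Gibbs measure for `ψ` on `Σ^{α,β}`. -/
def WeakGibbs (α β : ℝ) (ν : Measure (ℤ → ℕ)) (ψ : (ℤ → ℕ) → ℝ) : Prop :=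
  ∀ δ : ℝ, 0 < δ → ∃ N : ℕ, ∀ m : ℕ, N ≤ m → ∀ x ∈ SigmaAB α β,
    |Real.log (ν (cyl α β x m)).toReal / m -
      (∑ l ∈ Finset.Icc (1 : ℤ) (m : ℤ), ψ (shiftI l x)) / m| ≤ δ


/-- Concatenation `w·x` of a word and a one-sided sequence. -/
def wordApp (w : List ℕ) (x : ℕ → ℕ) : ℕ → ℕ :=
  fun n => if n < w.length then w.getD n 1 else x (n - w.length)

/-- `σ^k` on one-sided sequences. -/
def shiftN (k : ℕ) (s : ℕ → ℕ) : ℕ → ℕ := fun n => s (k + n)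

end AB

namespace AB

/-! ### Infrastructure for stmt4 -/

section Infra

variable {α β : ℝ}

lemma apos (hβ : 3 < β) (hα : α = 1 / β) : 0 < α := by
  rw [hα]; positivity

lemma a3 (hβ : 3 < β) (hα : α = 1 / β) : 3 * α < 1 := by
  rw [hα, mul_one_div, div_lt_one (by linarith : (0:ℝ) < β)]; exact hβ

lemma bmula (hβ : 3 < β) (hα : α = 1 / β) : β * α = 1 := by
  rw [hα]; field_simp

lemma digit_int (hβ : 3 < β) (hα : α = 1 / β) {x : ℝ} (hx : 0 ≤ x) :
    ((digit α β x : ℤ)) = ⌊β * x + α⌋ := by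
  have h0 : (0:ℝ) ≤ β * x + α := by nlinarith [apos hβ hα]
  exact Int.toNat_of_nonneg (Int.floor_nonneg.2 h0)

lemma digit_le_real (hβ : 3 < β) (hα : α = 1 / β) {x : ℝ} (hx : 0 ≤ x) :
    (digit α β x : ℝ) ≤ β * x + α := by
  have h := digit_int hβ hα hx
  have h2 : ((digit α β x : ℤ) : ℝ) ≤ β * x + α := by rw [h]; exact Int.floor_le _
  push_cast at h2; exact h2

lemma real_lt_digit (hβ : 3 < β) (hα : α = 1 / β) {x : ℝ} (hx : 0 ≤ x) :
    β * x + α < (digit α β x : ℝ) + 1 := by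
  have h := digit_int hβ hα hx
  have h2 : β * x + α < ((digit α β x : ℤ) : ℝ) + 1 := by rw [h]; exact Int.lt_floor_add_one _
  push_cast at h2; exact h2

lemma T_eq_digit (hβ : 3 < β) (hα : α = 1 / β) {x : ℝ} (hx : 0 ≤ x) :
    T α β x = β * x + α - (digit α β x : ℝ) := by
  unfold T
  have h := digit_int hβ hα hx
  rw [← h]; push_cast; ring

lemma T_nonneg (x : ℝ) : 0 ≤ T α β x := by
  have : T α β x = Int.fract (β * x + α) := rfl
  rw [this]; exact Int.fract_nonneg _

lemma T_lt_one (x : ℝ) : T α β x < 1 := by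
  have : T α β x = Int.fract (β * x + α) := rfl
  rw [this]; exact Int.fract_lt_one _

lemma iter_nonneg {x : ℝ} (hx : 0 ≤ x) (n : ℕ) : 0 ≤ (T α β)^[n] x := by
  cases n with
  | zero => exact hx
  | succ n => rw [Function.iterate_succ_apply']; exact T_nonneg _

lemma iter_lt_one {x : ℝ} (hx : x < 1) (n : ℕ) : (T α β)^[n] x < 1 := by
  cases n with
  | zero => exact hx
  | succ n => rw [Function.iterate_succ_apply']; exact T_lt_one _

lemma digit_eq_of {x : ℝ} {d : ℕ} (h1 : (d : ℝ) ≤ β * x + α) (h2 : β * x + α < (d : ℝ) + 1) :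
    digit α β x = d := by
  unfold digit
  have : ⌊β * x + α⌋ = (d : ℤ) := by
    rw [Int.floor_eq_iff]; constructor <;> push_cast <;> linarith
  rw [this]; simp

lemma chain_arith (hβ : 3 < β) (d v : ℝ) : β * ((d - α + v) / β) + α = d + v := by
  field_simp; ring

lemma chain_digit (hβ : 3 < β) (d : ℕ) {v : ℝ} (hv0 : 0 ≤ v) (hv1 : v < 1) :
    digit α β (((d : ℝ) - α + v) / β) = d := by
  apply digit_eq_of <;> rw [chain_arith hβ] <;> linarith

lemma chain_T (hβ : 3 < β) (hα : α = 1 / β) (d : ℕ) {v : ℝ} (hv0 : 0 ≤ v) (hv1 : v < 1)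
    (hnn : 0 ≤ ((d : ℝ) - α + v) / β) :
    T α β (((d : ℝ) - α + v) / β) = v := by
  rw [T_eq_digit hβ hα hnn, chain_digit hβ d hv0 hv1, chain_arith hβ]; ring

lemma iSeq_succ_T (x : ℝ) (n : ℕ) : iSeq α β x (n + 1) = iSeq α β (T α β x) n := by
  unfold iSeq; rw [Function.iterate_succ_apply]

lemma iSeq_shift (x : ℝ) (k n : ℕ) : iSeq α β ((T α β)^[k] x) n = iSeq α β x (k + n) := by
  unfold iSeq
  rw [add_comm, Function.iterate_add_apply]

lemma Yrec (hβ : 3 < β) (hα : α = 1 / β) {x : ℝ} (hx : 0 ≤ x) (n : ℕ) :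
    (T α β)^[n + 1] x = β * (T α β)^[n] x + α - (iSeq α β x n : ℝ) := by
  rw [Function.iterate_succ_apply', T_eq_digit hβ hα (iter_nonneg hx n)]
  rfl

lemma T_zero (hβ : 3 < β) (hα : α = 1 / β) : T α β 0 = α := by
  have h0 := apos hβ hα
  have h1 := a3 hβ hα
  have : digit α β 0 = 0 := digit_eq_of (by push_cast; linarith [mul_zero β]) (by push_cast; nlinarith)
  rw [T_eq_digit hβ hα le_rfl, this]; push_cast; ring

lemma T_alpha (hβ : 3 < β) (hα : α = 1 / β) : T α β α = α := by
  have h0 := apos hβ hα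
  have h1 := a3 hβ hα
  have hba := bmula hβ hα
  have : digit α β α = 1 := digit_eq_of (by push_cast; nlinarith) (by push_cast; nlinarith)
  rw [T_eq_digit hβ hα h0.le, this]; push_cast; nlinarith

lemma iter_alpha (hβ : 3 < β) (hα : α = 1 / β) (n : ℕ) : (T α β)^[n] α = α := by
  induction n with
  | zero => rfl
  | succ n ih => rw [Function.iterate_succ_apply', ih, T_alpha hβ hα]

lemma iSeq_alpha (hβ : 3 < β) (hα : α = 1 / β) (n : ℕ) : iSeq α β α n = 1 := by
  have h0 := apos hβ hα
  have h1 := a3 hβ hα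
  have hba := bmula hβ hα
  unfold iSeq
  rw [iter_alpha hβ hα]
  exact digit_eq_of (by push_cast; nlinarith) (by push_cast; nlinarith)

lemma aSeq_zero (hβ : 3 < β) (hα : α = 1 / β) : aSeq α β 0 = 0 := by
  have h0 := apos hβ hα
  have h1 := a3 hβ hα
  unfold aSeq iSeq
  simp only [Function.iterate_zero_apply]
  exact digit_eq_of (by push_cast; nlinarith) (by push_cast; nlinarith)

lemma aSeq_succ (hβ : 3 < β) (hα : α = 1 / β) (n : ℕ) : aSeq α β (n + 1) = 1 := by
  unfold aSeq
  rw [iSeq_succ_T, T_zero hβ hα, iSeq_alpha hβ hα]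

lemma lam_lb (hβ : 3 < β) (hα : α = 1 / β) : α + β - 1 ≤ (lamNat α β : ℝ) := by
  have h3 : (3:ℤ) < ⌈α + β⌉ := Int.lt_ceil.2 (by push_cast; linarith [apos hβ hα])
  have : (lamNat α β : ℤ) = ⌈α + β⌉ - 1 := Int.toNat_of_nonneg (by omega)
  have h4 : ((lamNat α β : ℤ) : ℝ) = (⌈α + β⌉ : ℝ) - 1 := by rw [this]; push_cast; ring
  push_cast at h4
  rw [h4]
  linarith [Int.le_ceil (α + β)]

lemma lam_ub (hβ : 3 < β) (hα : α = 1 / β) : (lamNat α β : ℝ) < α + β := by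
  have h3 : (3:ℤ) < ⌈α + β⌉ := Int.lt_ceil.2 (by push_cast; linarith [apos hβ hα])
  have : (lamNat α β : ℤ) = ⌈α + β⌉ - 1 := Int.toNat_of_nonneg (by omega)
  have h4 : ((lamNat α β : ℤ) : ℝ) = (⌈α + β⌉ : ℝ) - 1 := by rw [this]; push_cast; ring
  push_cast at h4
  rw [h4]
  have := Int.ceil_lt_add_one (α + β)
  linarith

lemma lam_ge3 (hβ : 3 < β) (hα : α = 1 / β) : 3 ≤ lamNat α β := by
  have h := lam_lb hβ hα
  have h0 := apos hβ hα
  have h2 : (2:ℝ) < (lamNat α β : ℝ) := by linarith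
  have : (2:ℕ) < lamNat α β := by exact_mod_cast h2
  omega

lemma digit_le_lam (hβ : 3 < β) (hα : α = 1 / β) {x : ℝ} (hx0 : 0 ≤ x) (hx1 : x < 1) :
    digit α β x ≤ lamNat α β := by
  have h1 := digit_le_real hβ hα hx0
  have h2 := lam_lb hβ hα
  have hbx : β * x < β := by nlinarith
  have : (digit α β x : ℝ) < (lamNat α β : ℝ) + 1 := by nlinarith
  exact_mod_cast Nat.lt_add_one_iff.mp (by exact_mod_cast this)

lemma digit_ge_one (hβ : 3 < β) (hα : α = 1 / β) {x : ℝ} (hx : α ≤ x) :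
    1 ≤ digit α β x := by
  have h0 := apos hβ hα
  have hba := bmula hβ hα
  have hx0 : 0 ≤ x := le_trans h0.le hx
  have h1 := real_lt_digit hβ hα hx0
  have : (0:ℝ) < (digit α β x : ℝ) := by nlinarith
  exact_mod_cast Nat.one_le_iff_ne_zero.2 (by intro h; rw [h] at this; norm_num at this)

lemma orbit01 (hβ : 3 < β) (hα : α = 1 / β) {x : ℝ} (hx0 : 0 ≤ x) (s : ℕ)
    (h0 : iSeq α β x 0 = 0) (h1 : ∀ i, 1 ≤ i → i ≤ s → iSeq α β x i = 1) :
    1 ≤ iSeq α β x (s + 1) := by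
  have hap := apos hβ hα
  have hba := bmula hβ hα
  have key : ∀ i, 1 ≤ i → i ≤ s + 1 → α ≤ (T α β)^[i] x := by
    intro i
    induction i with
    | zero => omega
    | succ i ih =>
      intro _ hle
      rcases Nat.eq_zero_or_pos i with h | h
      · subst h
        have : (iSeq α β x 0 : ℝ) = 0 := by rw [h0]; norm_num
        have hY := Yrec hβ hα hx0 0
        rw [hY, this]
        simp only [Function.iterate_zero_apply]
        nlinarith
      · have hi := ih h (by omega)
        have hd : iSeq α β x i = 1 := h1 i h (by omega)
        have hY := Yrec hβ hα hx0 i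
        rw [hY, hd]
        push_cast
        nlinarith
  have := key (s + 1) (by omega) le_rfl
  exact digit_ge_one hβ hα this

lemma digit_mono (hβ : 3 < β) (hα : α = 1 / β) {x y : ℝ} (hx0 : 0 ≤ x) (hxy : x ≤ y) :
    digit α β x ≤ digit α β y := by
  have hy0 : 0 ≤ y := le_trans hx0 hxy
  have h1 := digit_int hβ hα hx0
  have h2 := digit_int hβ hα hy0
  have : ⌊β * x + α⌋ ≤ ⌊β * y + α⌋ := Int.floor_le_floor (by nlinarith)
  omega

lemma iter_mono (hβ : 3 < β) (hα : α = 1 / β) {x y : ℝ} (hx0 : 0 ≤ x) (hy0 : 0 ≤ y)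
    (hxy : x ≤ y) :
    ∀ j, (∀ i, i < j → iSeq α β x i = iSeq α β y i) → (T α β)^[j] x ≤ (T α β)^[j] y := by
  intro j
  induction j with
  | zero => exact fun _ => hxy
  | succ j ih =>
    intro h
    have hj := ih (fun i hi => h i (by omega))
    rw [Yrec hβ hα hx0 j, Yrec hβ hα hy0 j, h j (by omega)]
    nlinarith

lemma iSeq_mono_at (hβ : 3 < β) (hα : α = 1 / β) {x y : ℝ} (hx0 : 0 ≤ x) (hy0 : 0 ≤ y)
    (hxy : x ≤ y) (j : ℕ) (h : ∀ i, i < j → iSeq α β x i = iSeq α β y i) :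
    iSeq α β x j ≤ iSeq α β y j :=
  digit_mono hβ hα (iter_nonneg hx0 j) (iter_mono hβ hα hx0 hy0 hxy j h)

end Infra



section BFacts

variable {α β : ℝ} {b : ℕ → ℕ}

lemma b_event (hb : Tendsto (iSeq α β) (𝓝[<] (1 : ℝ)) (𝓝 b)) (N : ℕ) :
    ∀ᶠ x in 𝓝[<] (1 : ℝ), ∀ i, i < N → iSeq α β x i = b i := by
  have h := tendsto_pi_nhds.mp hb
  induction N with
  | zero => simp
  | succ N ih =>
    have hN : ∀ᶠ x in 𝓝[<] (1 : ℝ), iSeq α β x N = b N := by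
      have := h N
      rw [nhds_discrete, tendsto_pure] at this
      exact this
    filter_upwards [ih, hN] with x h1 h2 i hi
    rcases Nat.lt_succ_iff_lt_or_eq.mp hi with h | h
    · exact h1 i h
    · subst h; exact h2

lemma exists_bpt (hb : Tendsto (iSeq α β) (𝓝[<] (1 : ℝ)) (𝓝 b)) (z : ℝ) (hz : z < 1) (N : ℕ) :
    ∃ x, z < x ∧ 0 ≤ x ∧ x < 1 ∧ ∀ i, i < N → iSeq α β x i = b i := by
  have h1 := b_event hb N
  have h2 : Set.Ioo (max z 0) 1 ∈ 𝓝[<] (1 : ℝ) :=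
    Ioo_mem_nhdsLT_of_mem ⟨by simp [hz], le_rfl⟩
  obtain ⟨x, hx1, hx2⟩ := (((eventually_mem_set).2 h2).and h1).exists
  exact ⟨x, lt_of_le_of_lt (le_max_left _ _) hx1.1, le_of_lt (lt_of_le_of_lt (le_max_right _ _) hx1.1),
    hx1.2, hx2⟩

lemma b_zero (hβ : 3 < β) (hα : α = 1 / β) (hb : Tendsto (iSeq α β) (𝓝[<] (1 : ℝ)) (𝓝 b)) :
    b 0 = lamNat α β := by
  have h0 := apos hβ hα
  have hlu := lam_ub hβ hα
  have hll := lam_lb hβ hα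
  have hz : ((lamNat α β : ℝ) - α) / β < 1 := by
    rw [div_lt_one (by linarith : (0:ℝ) < β)]; linarith
  obtain ⟨x, hx1, hx0, hxlt, hpref⟩ := exists_bpt hb _ hz 1
  have hgt : (lamNat α β : ℝ) < β * x + α := by
    have : (lamNat α β : ℝ) - α < β * x := by
      rw [div_lt_iff₀ (by linarith : (0:ℝ) < β)] at hx1; linarith [hx1]
    linarith
  have hlt : β * x + α < (lamNat α β : ℝ) + 1 := by
    have : β * x < β := by nlinarith
    linarith
  have hd : iSeq α β x 0 = lamNat α β := by
    unfold iSeq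
    simp only [Function.iterate_zero_apply]
    exact digit_eq_of (le_of_lt hgt) hlt
  rw [← hpref 0 (by norm_num), hd]

lemma le_b (hβ : 3 < β) (hα : α = 1 / β) (hb : Tendsto (iSeq α β) (𝓝[<] (1 : ℝ)) (𝓝 b))
    {ξ : ℝ} (hx0 : 0 ≤ ξ) (hx1 : ξ < 1) (j : ℕ) (hpref : ∀ i, i < j → iSeq α β ξ i = b i) :
    iSeq α β ξ j ≤ b j := by
  obtain ⟨x, hgt, hx0', hxlt, hp⟩ := exists_bpt hb ξ hx1 (j + 1)
  have hagree : ∀ i, i < j → iSeq α β ξ i = iSeq α β x i :=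
    fun i hi => (hpref i hi).trans (hp i (by omega)).symm
  have h := iSeq_mono_at hβ hα hx0 hx0' (le_of_lt hgt) j hagree
  rwa [hp j (by omega)] at h

end BFacts


section Prepend

variable {α β : ℝ}

lemma prepend (hβ : 3 < β) (hα : α = 1 / β) {y : ℝ} (hy0 : 0 ≤ y) (hy1 : y < 1)
    (j₀ : ℕ) (ζ : ℝ) (hz0 : 0 ≤ ζ) (hz2 : ζ < (T α β)^[j₀] y)
    (hz3 : ζ < α → ∀ m, m < j₀ → ¬ (iSeq α β y m = 0 ∧
      ∀ i, m < i → i < j₀ → iSeq α β y i = 1)) :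
    ∃ x, 0 ≤ x ∧ x < 1 ∧ (∀ i, i < j₀ → iSeq α β x i = iSeq α β y i) ∧
      (T α β)^[j₀] x = ζ := by
  have hap := apos hβ hα
  have ha3 := a3 hβ hα
  have hba := bmula hβ hα
  have hb0 : (0:ℝ) < β := by linarith
  set W : ℕ → ℕ := iSeq α β y with hW
  set Y : ℕ → ℝ := fun j => (T α β)^[j] y with hYdef
  have hY0 : ∀ j, 0 ≤ Y j := fun j => iter_nonneg hy0 j
  have hY1 : ∀ j, Y j < 1 := fun j => iter_lt_one hy1 j
  have hYr : ∀ j, Y (j + 1) = β * Y j + α - (W j : ℝ) := fun j => Yrec hβ hα hy0 j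
  have hYr' : ∀ j, Y j = ((W j : ℝ) - α + Y (j + 1)) / β := by
    intro j
    rw [hYr j]
    field_simp; ring
  let g : ℕ → ℝ := fun i => i.rec ζ (fun i acc => ((W (j₀ - (i + 1)) : ℝ) - α + acc) / β)
  have hg0 : g 0 = ζ := rfl
  have hgs : ∀ i, g (i + 1) = ((W (j₀ - (i + 1)) : ℝ) - α + g i) / β := fun i => rfl
  have hub : ∀ i, i ≤ j₀ → g i < Y (j₀ - i) := by
    intro i
    induction i with
    | zero => simpa [hg0] using hz2
    | succ i ih =>
      intro h
      have hyi := ih (by omega)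
      have hidx : j₀ - i = (j₀ - (i + 1)) + 1 := by omega
      rw [hgs i, hYr' (j₀ - (i + 1)), ← hidx]
      exact (div_lt_div_iff_of_pos_right hb0).2 (by linarith)
  have hlb : ∀ i, i ≤ j₀ → 0 ≤ g i := by
    refine Classical.byContradiction fun hcon => ?_
    push_neg at hcon
    obtain ⟨i, hi, hneg⟩ := hcon
    classical
    let P : ℕ → Prop := fun i => i ≤ j₀ ∧ g i < 0
    haveI : DecidablePred P := Classical.decPred P
    have hex : ∃ i, P i := ⟨i, hi, hneg⟩
    have hspec := Nat.find_spec hex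
    set i₀ := Nat.find hex with hi₀def
    obtain ⟨hi₀j, hi₀neg⟩ : i₀ ≤ j₀ ∧ g i₀ < 0 := hspec
    have hmin : ∀ i', i' < i₀ → 0 ≤ g i' := by
      intro i' hi'
      by_contra hneg'
      push_neg at hneg'
      exact Nat.find_min hex (show i' < Nat.find hex from hi₀def ▸ hi')
        ⟨by omega, by linarith⟩
    have h1 : 1 ≤ i₀ := by
      rcases Nat.eq_zero_or_pos i₀ with h | h
      · exfalso; rw [h, hg0] at hi₀neg; linarith
      · exact h
    set m := j₀ - i₀ with hm
    have hmj : m + i₀ = j₀ := by omega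
    have hgi₀ : g i₀ = ((W m : ℝ) - α + g (i₀ - 1)) / β := by
      have h2 : i₀ = (i₀ - 1) + 1 := by omega
      have h3 : j₀ - ((i₀ - 1) + 1) = m := by omega
      conv_lhs => rw [h2]
      rw [hgs, h3]
    have hg1 : 0 ≤ g (i₀ - 1) := hmin _ (by omega)
    have hWm : W m = 0 ∧ g (i₀ - 1) < α := by
      rw [hgi₀] at hi₀neg
      have hnum : (W m : ℝ) - α + g (i₀ - 1) < 0 := by
        by_contra hc; push_neg at hc
        have := div_nonneg hc hb0.le
        linarith
      constructor
      · have h3 : (W m : ℝ) < 1 := by linarith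
        exact_mod_cast Nat.lt_one_iff.mp (by exact_mod_cast h3)
      · have hWm0 : (0:ℝ) ≤ (W m : ℝ) := Nat.cast_nonneg _
        linarith
    have hchain : ∀ d, d ≤ i₀ - 1 →
        g (i₀ - 1 - d) < α ∧ α ≤ Y (m + 1 + d) ∧
        (∀ i, m < i → i < m + 1 + d → W i = 1) := by
      intro d
      induction d with
      | zero =>
        intro _
        refine ⟨by simpa using hWm.2, ?_, fun i h1' h2' => absurd h2' (by omega)⟩
        have h4 : Y (m + 1) = β * Y m + α - (W m : ℝ) := hYr m
        rw [h4, hWm.1]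
        push_cast
        nlinarith [hY0 m]
      | succ d ih =>
        intro hd
        obtain ⟨ihg, ihY, ihrun⟩ := ih (by omega)
        have hdig : 1 ≤ W (m + 1 + d) := digit_ge_one hβ hα ihY
        have hgd : g (i₀ - 1 - d) = ((W (m + 1 + d) : ℝ) - α + g (i₀ - 2 - d)) / β := by
          have h5 : i₀ - 1 - d = (i₀ - 2 - d) + 1 := by omega
          have h5b : j₀ - ((i₀ - 2 - d) + 1) = m + 1 + d := by omega
          conv_lhs => rw [h5]
          rw [hgs, h5b]
        have hglow : 0 ≤ g (i₀ - 2 - d) := hmin _ (by omega)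
        have hnumlt : (W (m + 1 + d) : ℝ) - α + g (i₀ - 2 - d) < α * β := by
          have h6 := ihg
          rw [hgd, div_lt_iff₀ hb0] at h6
          exact h6
        have hWj : W (m + 1 + d) = 1 := by
          by_contra hc
          have h2le : 2 ≤ W (m + 1 + d) := by omega
          have h7 : ((2:ℝ)) ≤ (W (m + 1 + d) : ℝ) := by exact_mod_cast h2le
          nlinarith
        refine ⟨?_, ?_, ?_⟩
        · have h8 : i₀ - 1 - (d + 1) = i₀ - 2 - d := by omega
          rw [h8]
          rw [hWj] at hnumlt
          push_cast at hnumlt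
          nlinarith
        · have h9 : Y (m + 1 + d + 1) = β * Y (m + 1 + d) + α - (W (m + 1 + d) : ℝ) := hYr _
          have h10 : m + 1 + (d + 1) = m + 1 + d + 1 := by omega
          rw [h10, h9, hWj]
          push_cast
          nlinarith
        · intro i hi1 hi2
          by_cases h : i = m + 1 + d
          · subst h; exact hWj
          · exact ihrun i hi1 (by omega)
    have hfin := hchain (i₀ - 1) le_rfl
    have hζα : ζ < α := by
      have h11 := hfin.1
      rw [show i₀ - 1 - (i₀ - 1) = 0 by omega, hg0] at h11
      exact h11
    have hrun : ∀ i, m < i → i < j₀ → W i = 1 := by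
      intro i ha hb'
      exact hfin.2.2 i ha (by omega)
    exact hz3 hζα m (by omega) ⟨hWm.1, hrun⟩
  have hglt1 : ∀ i, i ≤ j₀ → g i < 1 := fun i hi => lt_trans (hub i hi) (hY1 _)
  have hiter : ∀ d, d ≤ j₀ → (T α β)^[d] (g j₀) = g (j₀ - d) := by
    intro d
    induction d with
    | zero => simp
    | succ d ih =>
      intro h
      rw [Function.iterate_succ_apply', ih (by omega)]
      have hi1 : j₀ - d = (j₀ - (d + 1)) + 1 := by omega
      have hWd : j₀ - ((j₀ - (d + 1)) + 1) = d := by omega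
      have hnn : 0 ≤ ((W d : ℝ) - α + g (j₀ - (d + 1))) / β := by
        have h12 := hlb (j₀ - d) (by omega)
        rw [hi1, hgs, hWd] at h12
        exact h12
      rw [hi1, hgs, hWd]
      exact chain_T hβ hα (W d) (hlb _ (by omega)) (hglt1 _ (by omega)) hnn
  refine ⟨g j₀, hlb j₀ le_rfl, hglt1 j₀ le_rfl, ?_, ?_⟩
  · intro i hi
    have h13 : (T α β)^[i] (g j₀) = g (j₀ - i) := hiter i (by omega)
    show digit α β ((T α β)^[i] (g j₀)) = W i
    rw [h13]
    have hi1 : j₀ - i = (j₀ - (i + 1)) + 1 := by omega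
    have hWd : j₀ - ((j₀ - (i + 1)) + 1) = i := by omega
    rw [hi1, hgs, hWd]
    exact chain_digit hβ (W i) (hlb _ (by omega)) (hglt1 _ (by omega))
  · have h14 := hiter j₀ le_rfl
    rwa [Nat.sub_self, hg0] at h14

end Prepend

section ListGlue

variable {α β : ℝ}

lemma pre_length (s : ℕ → ℕ) (l : ℕ) : (pre s l).length = l := by
  simp [pre]

lemma pre_getElem? {s : ℕ → ℕ} {k i : ℕ} (h : i < k) : (pre s k)[i]? = some (s i) := by
  simp [pre, List.getElem?_map, List.getElem?_range h]

lemma pre_getElem?_ge {s : ℕ → ℕ} {k i : ℕ} (h : k ≤ i) : (pre s k)[i]? = none := by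
  apply List.getElem?_eq_none
  simp [pre_length]; omega

lemma letters_of_drop_eq {w : List ℕ} {s : ℕ → ℕ} {k : ℕ} (hk : k ≤ w.length)
    (h : w.drop (w.length - k) = pre s k) :
    ∀ i, i < k → w[w.length - k + i]? = some (s i) := by
  intro i hi
  have := congrArg (fun l => l[i]?) h
  simp only [List.getElem?_drop] at this
  rw [this, pre_getElem? hi]

lemma drop_eq_pre_of_letters {w : List ℕ} {s : ℕ → ℕ} {k : ℕ} (hk : k ≤ w.length)
    (h : ∀ i, i < k → w[w.length - k + i]? = some (s i)) :
    w.drop (w.length - k) = pre s k := by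
  apply List.ext_getElem?
  intro i
  rw [List.getElem?_drop]
  by_cases hi : i < k
  · rw [h i hi, pre_getElem? hi]
  · push_neg at hi
    rw [pre_getElem?_ge hi]
    apply List.getElem?_eq_none
    omega

lemma word_getElem? {s : ℕ → ℕ} {n i : ℕ} (w : List ℕ) (hw : w = pre s n) (hi : i < n) :
    w[i]? = some (s i) := by
  rw [hw]; exact pre_getElem? hi

lemma pre_mem_lang {x : ℝ} (hx0 : 0 ≤ x) (hx1 : x < 1) (n : ℕ) :
    pre (iSeq α β x) n ∈ Lang α β := by
  refine ⟨iSeq α β x, subset_closure ⟨x, Set.mem_Ico.mpr ⟨hx0, hx1⟩, rfl⟩, 0, ?_⟩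
  rw [pre_length]
  unfold wordN pre
  exact List.map_congr_left (by simp)

lemma lang_realize {w : List ℕ} (hw : w ∈ Lang α β) :
    ∃ y, 0 ≤ y ∧ y < 1 ∧ w = pre (iSeq α β y) w.length := by
  obtain ⟨s, hsX, k, hwk⟩ := hw
  set n := w.length with hn
  have hopen : IsOpen {t : ℕ → ℕ | ∀ i, i < k + n → t i = s i} := by
    have heq : {t : ℕ → ℕ | ∀ i, i < k + n → t i = s i} =
        ⋂ i ∈ Finset.range (k + n), {t : ℕ → ℕ | t i = s i} := by
      ext t; simp [Finset.mem_range]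
    rw [heq]
    refine isOpen_biInter_finset (fun i _ => ?_)
    have h2 : {t : ℕ → ℕ | t i = s i} = (fun t : ℕ → ℕ => t i) ⁻¹' {s i} := rfl
    rw [h2]
    exact IsOpen.preimage (continuous_apply i) (isOpen_discrete _)
  have hsU : s ∈ {t : ℕ → ℕ | ∀ i, i < k + n → t i = s i} := fun i _ => rfl
  obtain ⟨t, htU, ht⟩ := mem_closure_iff.mp hsX _ hopen hsU
  obtain ⟨x, hxI, rfl⟩ := ht
  rw [Set.mem_Ico] at hxI
  refine ⟨(T α β)^[k] x, iter_nonneg hxI.1 k, iter_lt_one hxI.2 k, ?_⟩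
  rw [hwk]
  unfold wordN pre
  apply List.map_congr_left
  intro i hi
  rw [List.mem_range] at hi
  rw [iSeq_shift, htU (k + i) (by omega)]

lemma kk_le (s : ℕ → ℕ) (w : List ℕ) : kk s w ≤ w.length :=
  Nat.findGreatest_le _

lemma kk_spec {s : ℕ → ℕ} {w : List ℕ} (h : 0 < kk s w) :
    w.drop (w.length - kk s w) = pre s (kk s w) := by
  have h2 : ¬ (kk s w = 0) := by omega
  unfold kk at *
  rw [Nat.findGreatest_eq_zero_iff] at h2
  push_neg at h2
  obtain ⟨k, hk0, hkle, hP⟩ := h2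
  exact Nat.findGreatest_spec (P := fun k => w.drop (w.length - k) = pre s k) hkle hP

lemma kk_ge {s : ℕ → ℕ} {w : List ℕ} {k : ℕ} (hk : k ≤ w.length)
    (h : w.drop (w.length - k) = pre s k) : k ≤ kk s w :=
  Nat.le_findGreatest hk h

lemma kk_eq_zero {s : ℕ → ℕ} {w : List ℕ}
    (h : ∀ k, 0 < k → k ≤ w.length → ¬ (w.drop (w.length - k) = pre s k)) : kk s w = 0 :=
  Nat.findGreatest_eq_zero_iff.mpr h

end ListGlue

set_option maxHeartbeats 2000000 in
/-- if `s(w) ∈ P^b ∖ {ε}` then `ŵ ∈ L^{α,β}` and `s(ŵ) = ε`. -/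
theorem stmt4 (α β : ℝ) (hβ : 3 < β) (hα : α = 1 / β)
    (b : ℕ → ℕ) (hb : Tendsto (iSeq α β) (𝓝[<] (1 : ℝ)) (𝓝 b))
    (w : List ℕ) (hw : w ∈ Lang α β)
    (hs : sWord (aSeq α β) b w ∈ Pset b) (hne : sWord (aSeq α β) b w ≠ []) :
    hatW (aSeq α β) b (lamNat α β) w ∈ Lang α β ∧
    sWord (aSeq α β) b (hatW (aSeq α β) b (lamNat α β) w) = [] := by
  have hap := apos hβ hα
  have ha3 := a3 hβ hα
  have hba := bmula hβ hα
  have hb0 : (0:ℝ) < β := by linarith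
  have hlam3 := lam_ge3 hβ hα
  have hlamub := lam_ub hβ hα
  have hb00 : b 0 = lamNat α β := b_zero hβ hα hb
  have ha0 := aSeq_zero hβ hα
  have hasucc := aSeq_succ hβ hα
  obtain ⟨y, hy0, hy1, hwpre⟩ := lang_realize hw
  set n := w.length with hn
  set W : ℕ → ℕ := iSeq α β y with hWdef
  have hwlet : ∀ i, i < n → w[i]? = some (W i) := fun i hi => word_getElem? w hwpre hi
  -- value facts about the orbit of y
  have hY0 : ∀ j, 0 ≤ (T α β)^[j] y := fun j => iter_nonneg hy0 j
  have hY1 : ∀ j, (T α β)^[j] y < 1 := fun j => iter_lt_one hy1 j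
  have hWdig : ∀ j, (W j : ℝ) ≤ β * (T α β)^[j] y + α :=
    fun j => digit_le_real hβ hα (hY0 j)
  have hWlam : ∀ j, W j ≤ lamNat α β := fun j => digit_le_lam hβ hα (hY0 j) (hY1 j)
  -- the sWord branch
  have hab : kk (aSeq α β) w < kk b w := by
    by_contra hc
    push_neg at hc
    rcases lt_or_eq_of_le hc with hlt | heq
    · have hsw : sWord (aSeq α β) b w = w.drop (n - kk (aSeq α β) w) := by
        unfold sWord; rw [if_pos hlt]
      have hka : 0 < kk (aSeq α β) w := by omega
      have hda := kk_spec hka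
      obtain ⟨l', hl'⟩ := hs
      rw [hsw, hda] at hl'
      have hlen : kk (aSeq α β) w = l' := by
        have := congrArg List.length hl'
        rwa [pre_length, pre_length] at this
      have hhead : (pre (aSeq α β) (kk (aSeq α β) w))[0]? = (pre b l')[0]? := by rw [hl']
      rw [pre_getElem? hka, pre_getElem? (by omega)] at hhead
      have : aSeq α β 0 = b 0 := Option.some.inj hhead
      rw [ha0, hb00] at this
      omega
    · have hsw : sWord (aSeq α β) b w = [] := by
        unfold sWord; rw [if_neg (by omega), if_neg (by omega)]
      exact hne hsw
  set l := kk b w with hldef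
  have hl1 : 1 ≤ l := by omega
  have hln : l ≤ n := kk_le b w
  have hsw : sWord (aSeq α β) b w = w.drop (n - l) := by
    unfold sWord
    rw [if_neg (by omega), if_pos hab]
  have hdrop : w.drop (n - l) = pre b l := kk_spec (by omega)
  have hswlen : (sWord (aSeq α β) b w).length = l := by
    rw [hsw, hdrop, pre_length]
  have hWb : ∀ i, i < l → W (n - l + i) = b i := by
    intro i hi
    have h := letters_of_drop_eq hln hdrop i hi
    rw [hwlet (n - l + i) (by omega)] at h
    exact Option.some.inj h
  have hhat : hatW (aSeq α β) b (lamNat α β) w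
      = w.take (n - l) ++ hatP (aSeq α β) b (lamNat α β) (pre b l) := by
    unfold hatW
    rw [hswlen, hsw, hdrop]
  have hu_ne : pre b l ≠ [] := by
    intro h
    have := congrArg List.length h
    rw [pre_length] at this
    simp at this
    omega
  have hu_notPa : pre b l ∉ Pset (aSeq α β) := by
    rintro ⟨l', hl'⟩
    have hlen : l = l' := by
      have := congrArg List.length hl'
      rwa [pre_length, pre_length] at this
    have hhead : (pre b l)[0]? = (pre (aSeq α β) l')[0]? := by rw [hl']
    rw [pre_getElem? (by omega), pre_getElem? (by omega)] at hhead
    have : b 0 = aSeq α β 0 := Option.some.inj hhead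
    rw [ha0, hb00] at this
    omega
  have hu_last : (pre b l).getLast?.getD 0 = b (l - 1) := by
    rw [List.getLast?_eq_getElem?, pre_length, pre_getElem? (by omega)]
    rfl
  have hdl : (pre b l).dropLast = pre b (l - 1) := by
    apply List.ext_getElem?
    intro i
    rw [List.dropLast_eq_take, pre_length, List.getElem?_take]
    by_cases hi : i < l - 1
    · rw [if_pos hi, pre_getElem? (by omega), pre_getElem? hi]
    · rw [if_neg hi, pre_getElem?_ge (by omega)]
  -- the lexicographic bound via b
  have hLb : ∀ k r : ℕ, k ≤ n → (∀ i, i < r → W (n - k + i) = b i) → W (n - k + r) ≤ b r := by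
    intro k r hk hpref
    have hξ0 : 0 ≤ (T α β)^[n - k] y := iter_nonneg hy0 _
    have hξ1 : (T α β)^[n - k] y < 1 := iter_lt_one hy1 _
    have h := le_b hβ hα hb hξ0 hξ1 r (fun i hi => by
      rw [iSeq_shift]; exact hpref i hi)
    rwa [iSeq_shift] at h
  
  rcases le_or_gt 3 (b (l - 1)) with hbl | hbl
  · -- CASE A : last letter of u is ≥ 3
    set c := b (l - 1) - 1 with hcdef
    have hc2 : 2 ≤ c := by omega
    have hcreal : (c : ℝ) = (b (l - 1) : ℝ) - 1 := by
      rw [hcdef]; push_cast [Nat.cast_sub (by omega : 1 ≤ b (l - 1))]; ring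
    have hPA : hatP (aSeq α β) b (lamNat α β) (pre b l) = (pre b l).dropLast ++ [c] := by
      unfold hatP
      rw [if_neg hu_ne, if_neg (by simpa using hu_notPa), if_pos (by rw [hu_last]; exact hbl),
        hu_last]
    have hWn1 : W (n - 1) = b (l - 1) := by
      have h := hWb (l - 1) (by omega)
      rwa [show n - l + (l - 1) = n - 1 by omega] at h
    -- letters of ŵ
    have hlenA : (hatW (aSeq α β) b (lamNat α β) w).length = n := by
      rw [hhat, hPA, hdl]
      simp [List.length_append, List.length_take, pre_length]
      omega
    have hletA : ∀ j, j < n → (hatW (aSeq α β) b (lamNat α β) w)[j]?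
        = some (if j = n - 1 then c else W j) := by
      intro j hj
      rw [hhat, hPA, hdl]
      have hlt : (w.take (n - l)).length = n - l := by
        rw [List.length_take]; omega
      rw [List.getElem?_append, hlt]
      by_cases hjl : j < n - l
      · rw [if_pos hjl, List.getElem?_take, if_pos hjl, hwlet j hj, if_neg (by omega)]
      · push_neg at hjl
        rw [if_neg (by omega), List.getElem?_append, pre_length]
        by_cases hj2 : j - (n - l) < l - 1
        · rw [if_pos hj2, pre_getElem? hj2]
          have hWj : b (j - (n - l)) = W j := by
            have h := hWb (j - (n - l)) (by omega)
            rw [show n - l + (j - (n - l)) = j by omega] at h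
            exact h.symm
          rw [hWj, if_neg (by omega)]
        · have hj4 : j = n - 1 := by omega
          rw [if_neg hj2, show j - (n - l) - (l - 1) = 0 by omega, if_pos hj4]
          rfl
    -- witness point
    have hclam : (c : ℝ) ≤ (lamNat α β : ℝ) - 1 := by
      have h := hWlam (n - 1)
      rw [hWn1] at h
      rw [hcreal]
      have : (b (l - 1) : ℝ) ≤ (lamNat α β : ℝ) := by exact_mod_cast h
      linarith
    set ζ : ℝ := ((c : ℝ) - α + α) / β with hζdef
    have hζ0 : 0 ≤ ζ := by
      rw [hζdef, show (c:ℝ) - α + α = (c:ℝ) by ring]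
      positivity
    have hζval : ζ = (c : ℝ) / β := by rw [hζdef]; ring
    have hζα : α ≤ ζ := by
      rw [hζval, hα, div_le_div_iff₀ (by linarith) hb0]
      have : (1:ℝ) ≤ (c:ℝ) := by exact_mod_cast (by omega : 1 ≤ c)
      nlinarith
    have hζ2 : ζ < (T α β)^[n - 1] y := by
      have hd := hWdig (n - 1)
      rw [hWn1] at hd
      rw [hζval, div_lt_iff₀ hb0]
      rw [hcreal]
      nlinarith
    obtain ⟨x, hx0, hx1, hxd, hxT⟩ := prepend hβ hα hy0 hy1 (n - 1) ζ hζ0 hζ2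
      (fun hcon => absurd hcon (by linarith))
    have hxdig : iSeq α β x (n - 1) = c := by
      show digit α β ((T α β)^[n - 1] x) = c
      rw [hxT, hζdef]
      exact chain_digit hβ c hap.le (by linarith)
    have hhatwA : hatW (aSeq α β) b (lamNat α β) w = pre (iSeq α β x) n := by
      apply List.ext_getElem?
      intro j
      by_cases hj : j < n
      · rw [hletA j hj, pre_getElem? hj]
        by_cases hj1 : j = n - 1
        · rw [if_pos hj1, hj1, hxdig]
        · rw [if_neg hj1, hxd j (by omega)]
      · rw [pre_getElem?_ge (by omega)]
        apply List.getElem?_eq_none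
        rw [hlenA]; omega
    constructor
    · rw [hhatwA]; exact pre_mem_lang hx0 hx1 n
    · -- part 2
      have hka0 : kk (aSeq α β) (hatW (aSeq α β) b (lamNat α β) w) = 0 := by
        apply kk_eq_zero
        intro k hk0 hkn heq
        rw [hlenA] at hkn
        have hlets := letters_of_drop_eq (by rw [hlenA]; exact hkn) heq
        have h1 := hlets (k - 1) (by omega)
        rw [show (hatW (aSeq α β) b (lamNat α β) w).length - k + (k - 1) = n - 1 by
          rw [hlenA]; omega] at h1
        rw [hletA (n - 1) (by omega), if_pos rfl] at h1
        have h2 : c = aSeq α β (k - 1) := Option.some.inj h1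
        rcases Nat.eq_zero_or_pos (k - 1) with h3 | h3
        · rw [h3, ha0] at h2; omega
        · obtain ⟨k', hk'⟩ := Nat.exists_eq_add_of_lt h3
          rw [show k - 1 = k' + 1 by omega, hasucc k'] at h2
          omega
      have hkb0 : kk b (hatW (aSeq α β) b (lamNat α β) w) = 0 := by
        apply kk_eq_zero
        intro k hk0 hkn heq
        rw [hlenA] at hkn
        have hlets := letters_of_drop_eq (by rw [hlenA]; exact hkn) heq
        have hidx : ∀ i, i < k → (hatW (aSeq α β) b (lamNat α β) w).length - k + i = n - k + i := by
          intro i hi; rw [hlenA]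
        have h1 := hlets (k - 1) (by omega)
        rw [hidx (k - 1) (by omega), show n - k + (k - 1) = n - 1 by omega,
          hletA (n - 1) (by omega), if_pos rfl] at h1
        have hlast : c = b (k - 1) := Option.some.inj h1
        have hpref : ∀ i, i < k - 1 → W (n - k + i) = b i := by
          intro i hi
          have h2 := hlets i (by omega)
          rw [hidx i (by omega), hletA (n - k + i) (by omega),
            if_neg (by omega)] at h2
          exact Option.some.inj h2
        have h3 := hLb k (k - 1) hkn hpref
        rw [show n - k + (k - 1) = n - 1 by omega, hWn1, ← hlast] at h3
        omega
      unfold sWord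
      rw [hka0, hkb0]
      simp

  · -- CASE B : b (l-1) ≤ 2
    have hbl' : b (l - 1) ≤ 2 := by omega
    have hl2 : 2 ≤ l := by
      by_contra h
      have hl1' : l = 1 := by omega
      rw [hl1', show (1:ℕ) - 1 = 0 from rfl, hb00] at hbl
      omega
    set k1 := kk (aSeq α β) (pre b (l - 1)) with hk1def
    have hk1lenle : k1 ≤ l - 1 := by
      have h := kk_le (aSeq α β) (pre b (l - 1))
      rw [pre_length] at h
      omega
    have hk1spec : 1 ≤ k1 → ∀ i, i < k1 → b (l - 1 - k1 + i) = aSeq α β i := by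
      intro hk i hi
      have hsp := kk_spec (s := aSeq α β) (w := pre b (l - 1)) (by omega)
      have hlets := letters_of_drop_eq (by rw [pre_length]; omega) hsp
      have h := hlets i hi
      rw [pre_length] at h
      rw [pre_getElem? (by omega)] at h
      exact Option.some.inj h
    have hk1le : k1 ≤ l - 2 := by
      by_contra h
      have hk1l : k1 = l - 1 := by omega
      have h0 := hk1spec (by omega) 0 (by omega)
      rw [show l - 1 - k1 + 0 = 0 by omega, ha0, hb00] at h0
      omega
    set p := l - k1 - 2 with hpdef
    set j₀ := n - l + p with hj0def
    have hpl : p + 1 < l := by omega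
    have hj₀n : j₀ + 1 + k1 = n - 1 := by omega
    have hWp : W j₀ = b p := by
      rw [hj0def]; exact hWb p (by omega)
    have hWp1 : W (j₀ + 1) = b (p + 1) := by
      rw [hj0def, show n - l + p + 1 = n - l + (p + 1) by omega]
      exact hWb (p + 1) hpl
    have hWn1 : W (n - 1) = b (l - 1) := by
      have h := hWb (l - 1) (by omega)
      rwa [show n - l + (l - 1) = n - 1 by omega] at h
    have hbp1 : 1 ≤ k1 → b (p + 1) = 0 := by
      intro hk
      have h := hk1spec hk 0 (by omega)
      rwa [show l - 1 - k1 + 0 = p + 1 by omega, ha0] at h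
    have hbrun : ∀ i, 1 ≤ i → i < k1 → b (p + 1 + i) = 1 := by
      intro i h1 h2
      have h := hk1spec (by omega) i h2
      obtain ⟨i', rfl⟩ : ∃ i', i = i' + 1 := ⟨i - 1, by omega⟩
      rwa [show l - 1 - k1 + (i' + 1) = p + 1 + (i' + 1) by omega, hasucc] at h
    have hWrun : ∀ i, 1 ≤ i → i < k1 → W (j₀ + 1 + i) = 1 := by
      intro i h1 h2
      have h := hWb (p + 1 + i) (by omega)
      rw [show n - l + (p + 1 + i) = j₀ + 1 + i by omega] at h
      rw [h]
      exact hbrun i h1 h2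
    have hbl1pos : 1 ≤ k1 → 1 ≤ b (l - 1) := by
      intro hk
      have h0 : iSeq α β ((T α β)^[j₀ + 1] y) 0 = 0 := by
        rw [iSeq_shift, show j₀ + 1 + 0 = j₀ + 1 by omega]
        show W (j₀ + 1) = 0
        rw [hWp1]; exact hbp1 hk
      have h1 : ∀ i, 1 ≤ i → i ≤ k1 - 1 → iSeq α β ((T α β)^[j₀ + 1] y) i = 1 := by
        intro i hi1 hi2
        rw [iSeq_shift]
        exact hWrun i hi1 (by omega)
      have ho := orbit01 hβ hα (hY0 (j₀ + 1)) (k1 - 1) h0 h1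
      rw [iSeq_shift, show j₀ + 1 + (k1 - 1 + 1) = n - 1 by omega] at ho
      rw [← hWn1]
      exact ho
    have hbppos : 1 ≤ b p := by
      rcases Nat.eq_zero_or_pos p with hp0 | hppos
      · rw [hp0, hb00]; omega
      · rcases Nat.eq_zero_or_pos k1 with hk0 | hk1pos
        · by_contra hbp
          push_neg at hbp
          have hbp0 : b p = 0 := by omega
          have hsuf : (pre b (l - 1)).drop ((pre b (l - 1)).length - 1)
              = pre (aSeq α β) 1 := by
            apply drop_eq_pre_of_letters (by rw [pre_length]; omega)
            intro i hi
            have hi0 : i = 0 := by omega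
            rw [hi0, pre_length, show l - 1 - 1 + 0 = p by omega,
              pre_getElem? (by omega), hbp0, ha0]
          have := kk_ge (by rw [pre_length]; omega) hsuf
          omega
        · by_contra hbp
          push_neg at hbp
          have hbp0 : b p = 0 := by omega
          have h0 : iSeq α β ((T α β)^[j₀] y) 0 = 0 := by
            rw [iSeq_shift, show j₀ + 0 = j₀ by omega]
            show W j₀ = 0
            rw [hWp]; exact hbp0
          have ho := orbit01 hβ hα (hY0 j₀) 0 h0 (fun i hi1 hi2 => absurd (hi1.trans hi2) (by omega))
          rw [iSeq_shift, show j₀ + (0 + 1) = j₀ + 1 by omega] at ho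
          have h5 : iSeq α β y (j₀ + 1) = 0 := by
            show W (j₀ + 1) = 0
            rw [hWp1]; exact hbp1 hk1pos
          omega
    have hbpLam : b p ≤ lamNat α β := by
      rw [← hWp]; exact hWlam j₀
    have hPB : hatP (aSeq α β) b (lamNat α β) (pre b l)
        = ((pre b l).set p (b p - 1)).set (p + 1) (lamNat α β - 1) := by
      unfold hatP
      rw [if_neg hu_ne, if_neg (by simpa using hu_notPa), if_neg (by rw [hu_last]; omega)]
      rw [hdl, ← hk1def, pre_length]
      have hgetd : (pre b l).getD (l - k1 - 2) 0 = b p := by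
        rw [List.getD_eq_getElem?_getD, show l - k1 - 2 = p by omega,
          pre_getElem? (by omega : p < l)]
        rfl
      rw [hgetd, show l - k1 - 2 = p by omega, show l - k1 - 1 = p + 1 by omega]
    have hlenB : (hatW (aSeq α β) b (lamNat α β) w).length = n := by
      rw [hhat, hPB]
      simp [List.length_append, List.length_take, List.length_set, pre_length]
      omega
    have hletB : ∀ j, j < n → (hatW (aSeq α β) b (lamNat α β) w)[j]?
        = some (if j = j₀ then b p - 1 else if j = j₀ + 1 then lamNat α β - 1 else W j) := by
      intro j hj
      rw [hhat, hPB]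
      have hlt : (w.take (n - l)).length = n - l := by rw [List.length_take]; omega
      rw [List.getElem?_append, hlt]
      by_cases hjl : j < n - l
      · rw [if_pos hjl, List.getElem?_take, if_pos hjl, hwlet j hj,
          if_neg (by omega), if_neg (by omega)]
      · push_neg at hjl
        rw [if_neg (by omega)]
        by_cases hj1 : j = j₀ + 1
        · rw [List.getElem?_set, if_pos (by omega : p + 1 = j - (n - l)),
            List.length_set, pre_length, if_pos (by omega), if_neg (by omega), if_pos hj1]
        · have hne1 : ¬ (p + 1 = j - (n - l)) := by omega
          rw [List.getElem?_set, if_neg hne1, List.getElem?_set]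
          by_cases hj2 : j = j₀
          · rw [if_pos (by omega : p = j - (n - l)), pre_length, if_pos (by omega),
              if_pos hj2]
          · rw [if_neg (by omega : ¬ p = j - (n - l)), pre_getElem? (by omega : j - (n - l) < l),
              if_neg hj2, if_neg hj1]
            have h := hWb (j - (n - l)) (by omega)
            rw [show n - l + (j - (n - l)) = j by omega] at h
            rw [h]
    -- construct the suffix value vv
    have halt1 : α < 1 := by linarith
    obtain ⟨vv, hvv0, hvv2a, hvvseq⟩ :
        ∃ vv : ℝ, 0 ≤ vv ∧ vv ≤ 2 * α ∧ ∀ i, i < k1 → iSeq α β vv i = W (j₀ + 2 + i) := by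
      rcases Nat.eq_zero_or_pos k1 with hk0 | hk1pos
      · exact ⟨α, hap.le, by linarith, fun i hi => absurd hi (by omega)⟩
      · set v1 : ℝ := (((b (l - 1) : ℕ) : ℝ) - α + α) / β with hv1def
        have hv1val : v1 = ((b (l - 1) : ℕ) : ℝ) / β := by rw [hv1def]; ring
        have hv10 : 0 ≤ v1 := by rw [hv1val]; positivity
        have hv12a : v1 ≤ 2 * α := by
          have h2 : ((b (l - 1) : ℕ) : ℝ) ≤ 2 := by exact_mod_cast hbl'
          have h2a : 2 * α = 2 / β := by rw [hα]; ring
          rw [hv1val, h2a]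
          gcongr
        have hv1dig : digit α β v1 = b (l - 1) := by
          rw [hv1def]; exact chain_digit hβ _ hap.le halt1
        have hv1T : T α β v1 = α := by
          rw [hv1def]
          exact chain_T hβ hα _ hap.le halt1 (by rw [← hv1def]; exact hv10)
        let ρ : ℕ → ℝ := fun i => i.rec v1 (fun _ acc => (((1 : ℕ) : ℝ) - α + acc) / β)
        have hρ0 : ρ 0 = v1 := rfl
        have hρs : ∀ i, ρ (i + 1) = (((1 : ℕ) : ℝ) - α + ρ i) / β := fun i => rfl
        have hρbnd : ∀ i, 0 ≤ ρ i ∧ ρ i ≤ 2 * α := by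
          intro i
          induction i with
          | zero => exact ⟨hv10, hv12a⟩
          | succ i ih =>
            rw [hρs]
            constructor
            · apply div_nonneg ?_ hb0.le
              push_cast
              linarith [ih.1]
            · rw [div_le_iff₀ hb0]
              push_cast
              nlinarith [ih.2]
        have hρlt1 : ∀ i, ρ i < 1 := fun i => by nlinarith [(hρbnd i).2, (hρbnd i).1]
        have hρT : ∀ i, T α β (ρ (i + 1)) = ρ i := by
          intro i
          rw [hρs]
          exact chain_T hβ hα 1 (hρbnd i).1 (hρlt1 i) (by rw [← hρs]; exact (hρbnd (i + 1)).1)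
        have hρdig : ∀ i, digit α β (ρ (i + 1)) = 1 := by
          intro i
          rw [hρs]
          exact chain_digit hβ 1 (hρbnd i).1 (hρlt1 i)
        have hρseq : ∀ r, (∀ i, i < r → iSeq α β (ρ r) i = 1) ∧ iSeq α β (ρ r) r = b (l - 1) := by
          intro r
          induction r with
          | zero =>
            refine ⟨fun i hi => absurd hi (by omega), ?_⟩
            show digit α β ((T α β)^[0] (ρ 0)) = b (l - 1)
            exact hv1dig
          | succ r ih =>
            constructor
            · intro i hi
              cases i with
              | zero =>
                show digit α β ((T α β)^[0] (ρ (r + 1))) = 1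
                simpa using hρdig r
              | succ i =>
                rw [iSeq_succ_T, hρT r]
                exact ih.1 i (by omega)
            · rw [iSeq_succ_T, hρT r]
              exact ih.2
        refine ⟨ρ (k1 - 1), (hρbnd _).1, (hρbnd _).2, ?_⟩
        intro i hi
        rcases Nat.lt_or_ge i (k1 - 1) with hik | hik
        · rw [(hρseq (k1 - 1)).1 i hik]
          have h := hWrun (i + 1) (by omega) (by omega)
          rw [show j₀ + 1 + (i + 1) = j₀ + 2 + i by omega] at h
          rw [h]
        · have hieq : i = k1 - 1 := by omega
          rw [hieq, (hρseq (k1 - 1)).2]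
          rw [show j₀ + 2 + (k1 - 1) = n - 1 by omega, hWn1]
    have hvvlt1 : vv < 1 := by nlinarith
    -- zj1 : the value at position j₀+1
    have hc3real : ((lamNat α β - 1 : ℕ) : ℝ) = (lamNat α β : ℝ) - 1 := by
      push_cast [Nat.cast_sub (by omega : 1 ≤ lamNat α β)]
      ring
    have hlamR : (3 : ℝ) ≤ (lamNat α β : ℝ) := by exact_mod_cast hlam3
    set zj1 : ℝ := (((lamNat α β - 1 : ℕ) : ℝ) - α + vv) / β with hzj1def
    have hzj10 : 0 ≤ zj1 := by
      rw [hzj1def]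
      apply div_nonneg ?_ hb0.le
      rw [hc3real]
      linarith
    have hab1 : α * β = 1 := by rw [mul_comm]; exact hba
    have hzj1a : α ≤ zj1 := by
      rw [hzj1def, le_div_iff₀ hb0, hc3real]
      linarith
    have hzj1lt1 : zj1 < 1 := by
      rw [hzj1def, div_lt_one hb0, hc3real]
      linarith
    have hzj1dig : digit α β zj1 = lamNat α β - 1 := by
      rw [hzj1def]; exact chain_digit hβ _ hvv0 hvvlt1
    have hzj1T : T α β zj1 = vv := by
      rw [hzj1def]; exact chain_T hβ hα _ hvv0 hvvlt1 (by rw [← hzj1def]; exact hzj10)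
    -- ζ : the value at position j₀
    have hc4real : ((b p - 1 : ℕ) : ℝ) = ((b p : ℕ) : ℝ) - 1 := by
      push_cast [Nat.cast_sub hbppos]
      ring
    set ζ : ℝ := (((b p - 1 : ℕ) : ℝ) - α + zj1) / β with hζdef
    have hζ0 : 0 ≤ ζ := by
      rw [hζdef]
      apply div_nonneg ?_ hb0.le
      have : (0:ℝ) ≤ ((b p - 1 : ℕ) : ℝ) := Nat.cast_nonneg _
      linarith
    have hζdig : digit α β ζ = b p - 1 := by
      rw [hζdef]; exact chain_digit hβ _ hzj10 hzj1lt1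
    have hζT : T α β ζ = zj1 := by
      rw [hζdef]; exact chain_T hβ hα _ hzj10 hzj1lt1 (by rw [← hζdef]; exact hζ0)
    have hζ2 : ζ < (T α β)^[j₀] y := by
      have hd := hWdig j₀
      have hWpr : (W j₀ : ℝ) = ((b p : ℕ) : ℝ) := by exact_mod_cast hWp
      rw [hWpr] at hd
      rw [hζdef, div_lt_iff₀ hb0, hc4real]
      nlinarith
    have h3 : ζ < α → ∀ m, m < j₀ → ¬ (iSeq α β y m = 0 ∧
        ∀ i, m < i → i < j₀ → iSeq α β y i = 1) := by
      intro hζα m hm hpat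
      obtain ⟨hm0, hrun⟩ := hpat
      rcases le_or_gt 2 (b p) with h2 | h2
      · have hζge : α ≤ ζ := by
          rw [hζdef, le_div_iff₀ hb0, hc4real]
          have : (2:ℝ) ≤ ((b p : ℕ) : ℝ) := by exact_mod_cast h2
          linarith
        linarith
      · have hbp1' : b p = 1 := by omega
        rcases Nat.eq_zero_or_pos k1 with hk0 | hk1pos
        · -- k1 = 0 : contradiction via kk or b 0
          have hppos : 1 ≤ p := by
            by_contra hpp
            push_neg at hpp
            have hp0 : p = 0 := by omega
            rw [hp0, hb00] at hbp1'
            omega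
          rcases lt_trichotomy m (n - l) with hmlt | hmeq | hmgt
          · have hWnl : W (n - l) = b 0 := by simpa using hWb 0 (by omega)
            have h1 := hrun (n - l) (by omega) (by omega)
            have h1' : W (n - l) = 1 := h1
            rw [hWnl, hb00] at h1'
            omega
          · have hWnl : W (n - l) = b 0 := by simpa using hWb 0 (by omega)
            have hm0' : W m = 0 := hm0
            rw [hmeq, hWnl, hb00] at hm0'
            omega
          · set q' := m - (n - l) with hq'def
            have hbq' : b q' = 0 := by
              have h := hWb q' (by omega)
              rw [show n - l + q' = m by omega] at h
              rw [← h]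
              exact hm0
            have hbq'run : ∀ i, 1 ≤ i → q' + i ≤ p → b (q' + i) = 1 := by
              intro i h1 h2'
              rcases eq_or_lt_of_le h2' with he | hlt
              · rw [he]; exact hbp1'
              · have h := hWb (q' + i) (by omega)
                rw [show n - l + (q' + i) = m + i by omega] at h
                rw [← h]
                exact hrun (m + i) (by omega) (by omega)
            have hsuf : (pre b (l - 1)).drop ((pre b (l - 1)).length - (l - 1 - q'))
                = pre (aSeq α β) (l - 1 - q') := by
              apply drop_eq_pre_of_letters (by rw [pre_length]; omega)
              intro i hi
              rw [pre_length, show l - 1 - (l - 1 - q') + i = q' + i by omega,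
                pre_getElem? (by omega)]
              cases i with
              | zero => rw [Nat.add_zero, hbq', ha0]
              | succ i' => rw [hbq'run (i' + 1) (by omega) (by omega), hasucc]
            have := kk_ge (by rw [pre_length]; omega) hsuf
            omega
        · -- k1 ≥ 1 : orbit lemma
          have h0 : iSeq α β ((T α β)^[m] y) 0 = 0 := by
            rw [iSeq_shift, show m + 0 = m by omega]
            exact hm0
          have h1 : ∀ i, 1 ≤ i → i ≤ j₀ - m → iSeq α β ((T α β)^[m] y) i = 1 := by
            intro i hi1 hi2
            rw [iSeq_shift]
            rcases eq_or_lt_of_le hi2 with he | hlt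
            · rw [he, show m + (j₀ - m) = j₀ by omega]
              show W j₀ = 1
              rw [hWp]; exact hbp1'
            · exact hrun (m + i) (by omega) (by omega)
          have ho := orbit01 hβ hα (hY0 m) (j₀ - m) h0 h1
          rw [iSeq_shift, show m + (j₀ - m + 1) = j₀ + 1 by omega] at ho
          have h5 : iSeq α β y (j₀ + 1) = 0 := by
            show W (j₀ + 1) = 0
            rw [hWp1]; exact hbp1 hk1pos
          omega
    obtain ⟨x, hx0, hx1, hxd, hxT⟩ := prepend hβ hα hy0 hy1 j₀ ζ hζ0 hζ2 h3
    have hxj0 : iSeq α β x j₀ = b p - 1 := by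
      show digit α β ((T α β)^[j₀] x) = b p - 1
      rw [hxT, hζdef]
      exact chain_digit hβ _ hzj10 hzj1lt1
    have hxj1 : iSeq α β x (j₀ + 1) = lamNat α β - 1 := by
      have h1 : iSeq α β x (j₀ + 1) = iSeq α β ((T α β)^[j₀] x) 1 := (iSeq_shift x j₀ 1).symm
      rw [h1, hxT, iSeq_succ_T, hζT]
      show digit α β ((T α β)^[0] zj1) = lamNat α β - 1
      simpa using hzj1dig
    have hxj2 : ∀ i, i < k1 → iSeq α β x (j₀ + 2 + i) = W (j₀ + 2 + i) := by
      intro i hi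
      have h1 : iSeq α β x (j₀ + 2 + i) = iSeq α β ((T α β)^[j₀] x) (2 + i) := by
        rw [iSeq_shift]; congr 1; omega
      rw [h1, hxT]
      have h2 : iSeq α β ζ (2 + i) = iSeq α β zj1 (1 + i) := by
        rw [show 2 + i = (1 + i) + 1 by omega, iSeq_succ_T, hζT]
      rw [h2, show 1 + i = i + 1 by omega, iSeq_succ_T, hzj1T]
      exact hvvseq i hi
    have hhatwB : hatW (aSeq α β) b (lamNat α β) w = pre (iSeq α β x) n := by
      apply List.ext_getElem?
      intro j
      by_cases hj : j < n
      · rw [hletB j hj, pre_getElem? hj]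
        by_cases hj1 : j = j₀
        · rw [if_pos hj1, hj1, hxj0]
        · by_cases hj2 : j = j₀ + 1
          · rw [if_neg hj1, if_pos hj2, hj2, hxj1]
          · rw [if_neg hj1, if_neg hj2]
            rcases Nat.lt_or_ge j j₀ with hjlt | hjge
            · rw [hxd j hjlt]
            · have hj3 : j = j₀ + 2 + (j - j₀ - 2) := by omega
              rw [hj3, hxj2 (j - j₀ - 2) (by omega)]
      · rw [pre_getElem?_ge (by omega)]
        apply List.getElem?_eq_none
        rw [hlenB]; omega
    constructor
    · rw [hhatwB]; exact pre_mem_lang hx0 hx1 n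
    · -- part 2 for case B
      have hlet' : ∀ (s : ℕ → ℕ) (k : ℕ), 0 < k → k ≤ n →
          (hatW (aSeq α β) b (lamNat α β) w).drop
            ((hatW (aSeq α β) b (lamNat α β) w).length - k) = pre s k →
          ∀ i, i < k → (if n - k + i = j₀ then b p - 1
            else if n - k + i = j₀ + 1 then lamNat α β - 1 else W (n - k + i)) = s i := by
        intro s k hk0 hkn heq i hi
        have hlets := letters_of_drop_eq (by rw [hlenB]; omega) heq
        have h1 := hlets i hi
        rw [show (hatW (aSeq α β) b (lamNat α β) w).length - k + i = n - k + i by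
          rw [hlenB]] at h1
        rw [hletB (n - k + i) (by omega)] at h1
        exact Option.some.inj h1
      have hka0 : kk (aSeq α β) (hatW (aSeq α β) b (lamNat α β) w) = 0 := by
        apply kk_eq_zero
        intro k hk0 hkn' heq
        have hkn : k ≤ n := by rwa [hlenB] at hkn'
        have hL := hlet' (aSeq α β) k hk0 hkn heq
        rcases Nat.eq_zero_or_pos k1 with hk10 | hk11
        · -- k1 = 0 : the last letter is λ - 1
          have h1 := hL (k - 1) (by omega)
          rw [show n - k + (k - 1) = n - 1 by omega, if_neg (by omega),
            if_pos (by omega)] at h1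
          rcases Nat.eq_zero_or_pos (k - 1) with h3 | h3
          · rw [h3, ha0] at h1; omega
          · obtain ⟨k', hk'⟩ := Nat.exists_eq_add_of_lt h3
            rw [show k - 1 = k' + 1 by omega, hasucc k'] at h1
            omega
        · by_cases hcs : n - k ≤ j₀ + 1
          · -- the letter λ - 1 at position j₀ + 1 must be an a-letter
            have h1 := hL (j₀ + 1 - (n - k)) (by omega)
            rw [show n - k + (j₀ + 1 - (n - k)) = j₀ + 1 by omega, if_neg (by omega),
              if_pos rfl] at h1
            rcases Nat.eq_zero_or_pos (j₀ + 1 - (n - k)) with h3 | h3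
            · rw [h3, ha0] at h1; omega
            · obtain ⟨k', hk'⟩ := Nat.exists_eq_add_of_lt h3
              rw [show j₀ + 1 - (n - k) = k' + 1 by omega, hasucc k'] at h1
              omega
          · push_neg at hcs
            have h1 := hL (k - 1) (by omega)
            rw [show n - k + (k - 1) = n - 1 by omega, if_neg (by omega),
              if_neg (by omega)] at h1
            rcases Nat.eq_zero_or_pos (k - 1) with h3 | h3
            · rw [h3, ha0, hWn1] at h1
              have := hbl1pos hk11
              omega
            · have h2 := hL 0 (by omega)
              rw [Nat.add_zero, if_neg (by omega), if_neg (by omega), ha0] at h2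
              have h4 := hWrun (n - k - (j₀ + 1)) (by omega) (by omega)
              rw [show j₀ + 1 + (n - k - (j₀ + 1)) = n - k by omega] at h4
              omega
      have hkb0 : kk b (hatW (aSeq α β) b (lamNat α β) w) = 0 := by
        apply kk_eq_zero
        intro k hk0 hkn' heq
        have hkn : k ≤ n := by rwa [hlenB] at hkn'
        have hL := hlet' b k hk0 hkn heq
        rcases lt_trichotomy (n - k) j₀ with hc1 | hc1 | hc1
        · -- strict increase at j₀ against the lex bound
          have hpref : ∀ i, i < j₀ - (n - k) → W (n - k + i) = b i := by
            intro i hi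
            have h1 := hL i (by omega)
            rwa [if_neg (by omega), if_neg (by omega)] at h1
          have h2 := hL (j₀ - (n - k)) (by omega)
          rw [show n - k + (j₀ - (n - k)) = j₀ by omega, if_pos rfl] at h2
          have h3 := hLb k (j₀ - (n - k)) hkn hpref
          rw [show n - k + (j₀ - (n - k)) = j₀ by omega, hWp] at h3
          omega
        · have h1 := hL 0 (by omega)
          rw [Nat.add_zero, if_pos hc1] at h1
          rw [hb00] at h1
          omega
        · by_cases hc2 : n - k = j₀ + 1
          · have h1 := hL 0 (by omega)
            rw [Nat.add_zero, if_neg (by omega), if_pos hc2, hb00] at h1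
            omega
          · have h1 := hL 0 (by omega)
            rw [Nat.add_zero, if_neg (by omega), if_neg hc2] at h1
            rcases Nat.eq_zero_or_pos k1 with hk10 | hk11
            · omega
            · by_cases hc3 : k = 1
              · rw [show n - k = n - 1 by omega, hWn1, hb00] at h1
                omega
              · have h4 := hWrun (n - k - (j₀ + 1)) (by omega) (by omega)
                rw [show j₀ + 1 + (n - k - (j₀ + 1)) = n - k by omega] at h4
                rw [h4, hb00] at h1
                omega
      unfold sWord
      rw [hka0, hkb0]
      simp


end AB
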